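/- Let r ∈ ℝ² be such that the inverse Lozi map f⁻¹ (with 1 < a ≤ 2, -1 < b < 0, a+b > 1) is differentiable at all points f⁻ⁿ(r), n ≥ 0. Then there exists a one-dimensional subspace E^u_r of ℝ² such that ‖Dfⁿ(v)‖ ≥ βⁿ‖v‖ for all v ∈ Df⁻ⁿ(E^u_r), and Df⁻¹_r(E^u_r) = E^u_{f⁻¹(r)}, where β = (a+√(a²+4b))/2 > 1. -/

import Mathlib

/-- The Lozi map. -/
noncomputable def lozi (a b : ℝ) : ℝ × ℝ → ℝ × ℝ :=
  fun p => (1 + p.2 - a * |p.1|, b * p.1)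

/-- The inverse of the Lozi map. -/
noncomputable def loziInv (a b : ℝ) : ℝ × ℝ → ℝ × ℝ :=
  fun p => (p.2 / b, p.1 - 1 + a * |p.2 / b|)

open ContinuousLinearMap in
noncomputable def loziDeriv (a b s : ℝ) : ℝ × ℝ →L[ℝ] ℝ × ℝ :=
  ((snd ℝ ℝ ℝ) - (a * s) • (fst ℝ ℝ ℝ)).prod (b • (fst ℝ ℝ ℝ))

lemma loziDeriv_apply (a b s : ℝ) (v : ℝ × ℝ) :
    loziDeriv a b s v = (v.2 - a * s * v.1, b * v.1) := rfl

lemma hasFDerivAt_lozi (a b : ℝ) {q : ℝ × ℝ} (hq : q.1 ≠ 0) :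
    HasFDerivAt (lozi a b) (loziDeriv a b (if 0 < q.1 then 1 else -1)) q := by
  set s := if 0 < q.1 then (1:ℝ) else -1 with hs
  have h1 : HasFDerivAt (fun p : ℝ × ℝ => ((1:ℝ), (0:ℝ)) + loziDeriv a b s p)
      (loziDeriv a b s) q := (loziDeriv a b s).hasFDerivAt.const_add _
  apply h1.congr_of_eventuallyEq
  have habs : ∀ᶠ p : ℝ × ℝ in nhds q, |p.1| = s * p.1 := by
    rcases hq.lt_or_gt with h | h
    · have hop : IsOpen {p : ℝ × ℝ | p.1 < 0} := isOpen_lt continuous_fst continuous_const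
      filter_upwards [hop.mem_nhds h] with p hp
      rw [abs_of_neg hp, hs, if_neg (by intro hc; exact absurd h (by linarith))]; ring
    · have hop : IsOpen {p : ℝ × ℝ | 0 < p.1} := isOpen_lt continuous_const continuous_fst
      filter_upwards [hop.mem_nhds h] with p hp
      rw [abs_of_pos hp, hs, if_pos h]; ring
  filter_upwards [habs] with p hp
  show lozi a b p = _
  rw [lozi, loziDeriv_apply, hp, Prod.mk_add_mk]
  exact Prod.ext (by ring) (by ring)

lemma snd_ne_zero_of_diff {a b : ℝ} (ha : a ≠ 0) (hb : b ≠ 0) {p : ℝ × ℝ}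
    (h : DifferentiableAt ℝ (loziInv a b) p) : p.2 ≠ 0 := by
  intro hp
  have h1 : DifferentiableAt ℝ (fun y : ℝ => (p.1, y)) p.2 :=
    (differentiableAt_const _).prodMk differentiableAt_id
  have h2 : DifferentiableAt ℝ (fun y : ℝ => loziInv a b (p.1, y)) p.2 := by
    have := h.comp p.2 (by simpa using h1)
    exact this
  have h3 : DifferentiableAt ℝ (fun y : ℝ => p.1 - 1 + a * |y / b|) p.2 := by
    simpa [loziInv] using h2.snd
  have h4 : DifferentiableAt ℝ (fun y : ℝ => |y / b|) p.2 := by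
    have h5 := ((h3.sub (differentiableAt_const (p.1 - 1))).const_mul a⁻¹)
    have : (fun y : ℝ => a⁻¹ * ((p.1 - 1 + a * |y / b|) - (p.1 - 1))) =
        fun y : ℝ => |y / b| := by
      funext y; field_simp; ring
    simp only [Pi.sub_apply] at h5
    rwa [this] at h5
  rw [hp] at h4
  have hin : DifferentiableAt ℝ (fun x : ℝ => b * x) 0 := by
    simpa using (differentiableAt_id.const_mul b : DifferentiableAt ℝ (fun x : ℝ => b * x) 0)
  have h6 : DifferentiableAt ℝ ((fun y : ℝ => |y / b|) ∘ fun x : ℝ => b * x) 0 :=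
    DifferentiableAt.comp 0 (by simpa using h4) hin
  have h7 : DifferentiableAt ℝ (fun x : ℝ => |x|) 0 := by
    have heq : ((fun y : ℝ => |y / b|) ∘ fun x : ℝ => b * x) = fun x : ℝ => |x| := by
      funext x; show |b * x / b| = |x|; rw [mul_div_cancel_left₀ _ hb]
    rwa [heq] at h6
  exact not_differentiableAt_abs_zero h7

lemma lozi_loziInv {b : ℝ} (a : ℝ) (hb : b ≠ 0) (p : ℝ × ℝ) :
    lozi a b (loziInv a b p) = p := by
  unfold lozi loziInv
  exact Prod.ext (by ring) (by field_simp)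

lemma loziInv_lozi {b : ℝ} (a : ℝ) (hb : b ≠ 0) (p : ℝ × ℝ) :
    loziInv a b (lozi a b p) = p := by
  unfold lozi loziInv
  refine Prod.ext ?_ ?_
  · show b * p.1 / b = p.1
    rw [mul_div_cancel_left₀ _ hb]
  · show 1 + p.2 - a * |p.1| - 1 + a * |b * p.1 / b| = p.2
    rw [mul_div_cancel_left₀ _ hb]; ring

lemma cone_step {a b β s : ℝ} (ha : 0 < a) (hb1 : -1 < b) (hb : b < 0) (hβ1 : 1 < β)
    (hβ2 : β ^ 2 = a * β + b) (hs : |s| = 1) (w : ℝ × ℝ)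
    (hw : |w.2| ≤ -b / β * |w.1|) :
    |(loziDeriv a b s w).2| ≤ -b / β * |(loziDeriv a b s w).1| ∧
      β * ‖w‖ ≤ ‖loziDeriv a b s w‖ := by
  have hβ0 : 0 < β := by linarith
  set α : ℝ := -b / β with hα
  have hαβ : α * β = -b := by rw [hα, div_mul_cancel₀ _ (ne_of_gt hβ0)]
  have haα : a - α = β := by
    have : (a - α) * β = β * β := by rw [mul_comm β β, ← sq, hβ2]; rw [sub_mul, hαβ]; ring
    exact mul_right_cancel₀ (ne_of_gt hβ0) this
  have hα0 : 0 < α := div_pos (by linarith) hβ0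
  have hα1 : α < 1 := by
    rw [hα, div_lt_one hβ0]; linarith
  have hw1 : |w.2| ≤ |w.1| := hw.trans (by nlinarith [abs_nonneg w.1])
  have h1 : β * |w.1| ≤ |w.2 - a * s * w.1| := by
    have := abs_sub_abs_le_abs_sub (a * s * w.1) w.2
    rw [abs_sub_comm] at this
    have hm : |a * s * w.1| = a * |w.1| := by
      rw [abs_mul, abs_mul, hs, abs_of_pos ha]; ring
    rw [hm] at this
    nlinarith [abs_nonneg w.1]
  have h2 : |(loziDeriv a b s w).2| = -b * |w.1| := by
    rw [loziDeriv_apply]; simp only; rw [abs_mul, abs_of_neg hb]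
  have h1' : β * |w.1| ≤ |(loziDeriv a b s w).1| := by
    simpa [loziDeriv_apply] using h1
  constructor
  · rw [h2]
    calc -b * |w.1| = α * (β * |w.1|) := by rw [← hαβ]; ring
    _ ≤ α * |(loziDeriv a b s w).1| := mul_le_mul_of_nonneg_left h1' hα0.le
  · have hnw : ‖w‖ = |w.1| := by
      rw [Prod.norm_def, Real.norm_eq_abs, Real.norm_eq_abs, max_eq_left hw1]
    have hle : |(loziDeriv a b s w).1| ≤ ‖loziDeriv a b s w‖ := by
      rw [Prod.norm_def, Real.norm_eq_abs]; exact le_max_left _ _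
    rw [hnw]
    exact le_trans h1' hle

/-- Existence of unstable directions: if f⁻¹ is differentiable along the
backward orbit of r, there are one-dimensional subspaces E^u (E n being the
subspace at f⁻ⁿ(r)) such that Dfⁿ expands vectors of Df⁻ⁿ(E^u_r) by βⁿ and
Df⁻¹ maps E^u_{f⁻ⁿ(r)} to E^u_{f⁻ⁿ⁻¹(r)}. -/
theorem unstable_direction_exists (a b : ℝ) (ha1 : 1 < a) (ha2 : a ≤ 2)
    (hb1 : -1 < b) (hb2 : b < 0) (hab : 1 < a + b)
    (r : ℝ × ℝ)
    (hdiff : ∀ n : ℕ, DifferentiableAt ℝ (loziInv a b) ((loziInv a b)^[n] r)) :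
    ∃ E : ℕ → Submodule ℝ (ℝ × ℝ),
      (∀ n, Module.finrank ℝ (E n) = 1) ∧
      (∀ n, Submodule.map
          (fderiv ℝ (loziInv a b) ((loziInv a b)^[n] r)).toLinearMap (E n) = E (n + 1)) ∧
      (∀ n : ℕ, ∀ v ∈ E n,
        ‖fderiv ℝ ((lozi a b)^[n]) ((loziInv a b)^[n] r) v‖ ≥
          ((a + Real.sqrt (a ^ 2 + 4 * b)) / 2) ^ n * ‖v‖) := by
  have hb0 : b ≠ 0 := ne_of_lt hb2
  have ha0 : 0 < a := by linarith
  set β : ℝ := (a + Real.sqrt (a ^ 2 + 4 * b)) / 2 with hβdef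
  have hD : 0 < a ^ 2 + 4 * b := by nlinarith
  have hsq : Real.sqrt (a ^ 2 + 4 * b) ^ 2 = a ^ 2 + 4 * b := Real.sq_sqrt hD.le
  have hβ1 : 1 < β := by
    rw [hβdef]
    nlinarith [Real.sqrt_nonneg (a ^ 2 + 4 * b), hsq]
  have hβ2 : β ^ 2 = a * β + b := by
    rw [hβdef]; linear_combination hsq / 4
  have hβpos : (0:ℝ) < β := by linarith
  set q : ℕ → ℝ × ℝ := fun n => (loziInv a b)^[n] r with hqdef
  have hq2 : ∀ n, (q n).2 ≠ 0 := fun n => snd_ne_zero_of_diff (ne_of_gt ha0) hb0 (hdiff n)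
  have hqsucc : ∀ n, q (n + 1) = loziInv a b (q n) := fun n =>
    Function.iterate_succ_apply' _ _ _
  have hq1 : ∀ n, (q (n + 1)).1 ≠ 0 := by
    intro n
    rw [hqsucc n]
    show (q n).2 / b ≠ 0
    exact div_ne_zero (hq2 n) hb0
  have hlq : ∀ n, lozi a b (q (n + 1)) = q n := by
    intro n; rw [hqsucc n]; exact lozi_loziInv a hb0 _
  set A : ℕ → ℝ × ℝ →L[ℝ] ℝ × ℝ := fun n => fderiv ℝ (lozi a b) (q (n + 1)) with hAdef
  have hA : ∀ n, HasFDerivAt (lozi a b) (A n) (q (n + 1))  := by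
    intro n
    have h := hasFDerivAt_lozi a b (hq1 n)
    have hfd : A n = loziDeriv a b (if 0 < (q (n + 1)).1 then 1 else -1) := h.fderiv
    rw [hfd]; exact h
  have hAstep : ∀ n, ∀ w : ℝ × ℝ, |w.2| ≤ -b / β * |w.1| →
      (|(A n w).2| ≤ -b / β * |(A n w).1| ∧ β * ‖w‖ ≤ ‖A n w‖) := by
    intro n w hw
    have h := hasFDerivAt_lozi a b (hq1 n)
    have hfd : A n = loziDeriv a b (if 0 < (q (n + 1)).1 then 1 else -1) := h.fderiv
    rw [hfd]
    exact cone_step ha0 hb1 hb2 hβ1 hβ2 (by split <;> simp) w hw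
  set Dinv : ℕ → ℝ × ℝ →L[ℝ] ℝ × ℝ := fun n => fderiv ℝ (loziInv a b) (q n) with hDdef
  have hDinv : ∀ n, HasFDerivAt (loziInv a b) (Dinv n) (q n) := fun n => (hdiff n).hasFDerivAt
  have hAD : ∀ n v, A n (Dinv n v) = v := by
    intro n v
    have hg : HasFDerivAt (lozi a b) (A n) (loziInv a b (q n)) := by
      rw [← hqsucc n]; exact hA n
    have hcomp : HasFDerivAt (lozi a b ∘ loziInv a b) ((A n).comp (Dinv n)) (q n) :=
      hg.comp (q n) (hDinv n)
    have hidf : (lozi a b ∘ loziInv a b) = id := funext (lozi_loziInv a hb0)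
    rw [hidf] at hcomp
    have huniq := hcomp.unique (hasFDerivAt_id (q n))
    calc A n (Dinv n v) = ((A n).comp (Dinv n)) v := rfl
    _ = v := by rw [huniq]; rfl
  have hDA : ∀ n v, Dinv n (A n v) = v := by
    intro n v
    have hg : HasFDerivAt (loziInv a b) (Dinv n) (lozi a b (q (n + 1))) := by
      rw [hlq n]; exact hDinv n
    have hcomp : HasFDerivAt (loziInv a b ∘ lozi a b) ((Dinv n).comp (A n)) (q (n + 1)) :=
      hg.comp (q (n + 1)) (hA n)
    have hidf : (loziInv a b ∘ lozi a b) = id := funext (loziInv_lozi a hb0)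
    rw [hidf] at hcomp
    have huniq := hcomp.unique (hasFDerivAt_id (q (n + 1)))
    calc Dinv n (A n v) = ((Dinv n).comp (A n)) v := rfl
    _ = v := by rw [huniq]; rfl
  set Ψ : ℕ → ℝ × ℝ →L[ℝ] ℝ × ℝ := fun n =>
    Nat.rec (ContinuousLinearMap.id ℝ (ℝ × ℝ)) (fun k Ψk => (Dinv k).comp Ψk) n with hΨdef
  have hΨ0 : ∀ v : ℝ × ℝ, Ψ 0 v = v := fun v => rfl
  have hΨs : ∀ n (v : ℝ × ℝ), Ψ (n + 1) v = Dinv n (Ψ n v) := fun n v => rfl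
  set B : ℕ → ℝ × ℝ →L[ℝ] ℝ × ℝ := fun n =>
    Nat.rec (ContinuousLinearMap.id ℝ (ℝ × ℝ)) (fun k Bk => Bk.comp (A k)) n with hBdef
  have hBs : ∀ n (v : ℝ × ℝ), B (n + 1) v = B n (A n v) := fun n v => rfl
  have hBΨ : ∀ n (v : ℝ × ℝ), B n (Ψ n v) = v := by
    intro n; induction n with
    | zero => intro v; rfl
    | succ k ih => intro v; rw [hΨs, hBs, hAD, ih]
  have hΨB : ∀ n (v : ℝ × ℝ), Ψ n (B n v) = v := by
    intro n; induction n with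
    | zero => intro v; rfl
    | succ k ih => intro v; rw [hBs, hΨs, ih, hDA]
  have hBfd : ∀ n, HasFDerivAt ((lozi a b)^[n]) (B n) (q n) := by
    intro n; induction n with
    | zero => rw [Function.iterate_zero]; exact hasFDerivAt_id _
    | succ k ih =>
      have hg : HasFDerivAt ((lozi a b)^[k]) (B k) (lozi a b (q (k + 1))) := by
        rw [hlq k]; exact ih
      have hcomp : HasFDerivAt ((lozi a b)^[k] ∘ lozi a b) ((B k).comp (A k)) (q (k + 1)) :=
        hg.comp (q (k + 1)) (hA k)
      have hit : (lozi a b)^[k + 1] = (lozi a b)^[k] ∘ lozi a b :=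
        funext fun x => Function.iterate_succ_apply _ _ _
      rw [hit]; exact hcomp
  set C : Set (ℝ × ℝ) := {v | |v.2| ≤ -b / β * |v.1|} with hCdef
  have hCsmul : ∀ (c : ℝ) (v : ℝ × ℝ), v ∈ C → c • v ∈ C := by
    intro c v hv
    show |(c • v).2| ≤ -b / β * |(c • v).1|
    have h1 : (c • v).1 = c * v.1 := rfl
    have h2 : (c • v).2 = c * v.2 := rfl
    rw [h1, h2, abs_mul, abs_mul]
    calc |c| * |v.2| ≤ |c| * (-b / β * |v.1|) := mul_le_mul_of_nonneg_left hv (abs_nonneg c)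
    _ = -b / β * (|c| * |v.1|) := by ring
  have hCclosed : IsClosed C :=
    isClosed_le (continuous_abs.comp continuous_snd)
      (continuous_const.mul (continuous_abs.comp continuous_fst))
  have himp : ∀ k n, k ≤ n → ∀ w ∈ C, Ψ k (B n w) ∈ C := by
    intro k n hkn
    induction n, hkn using Nat.le_induction with
    | base => intro w hw; rw [hΨB]; exact hw
    | succ n hkn ih =>
      intro w hw
      rw [hBs]
      exact ih _ ((hAstep n w hw).1)
  set U : ℕ → Set (ℝ × ℝ) := fun n =>
    Metric.sphere (0 : ℝ × ℝ) 1 ∩ ⋂ k ∈ Set.Iic n, (Ψ k) ⁻¹' C with hUdef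
  have hUmem : ∀ n (v : ℝ × ℝ), v ∈ U n ↔ (‖v‖ = 1 ∧ ∀ k ≤ n, Ψ k v ∈ C) := by
    intro n v
    simp [hUdef, Set.mem_iInter, mem_sphere_zero_iff_norm]
  have hUne : ∀ n, (U n).Nonempty := by
    intro n
    have hw0 : ((1:ℝ), (0:ℝ)) ∈ C := by
      show |((1:ℝ), (0:ℝ)).2| ≤ -b / β * |((1:ℝ), (0:ℝ)).1|
      have : (0:ℝ) ≤ -b / β := le_of_lt (div_pos (by linarith) hβpos)
      simpa using this
    have hzne : B n ((1:ℝ), (0:ℝ)) ≠ 0 := by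
      intro h0
      have h := hΨB n ((1:ℝ), (0:ℝ))
      rw [h0, map_zero] at h
      exact one_ne_zero (congrArg Prod.fst h).symm
    set z := B n ((1:ℝ), (0:ℝ)) with hz
    refine ⟨‖z‖⁻¹ • z, (hUmem n _).2 ⟨?_, ?_⟩⟩
    · rw [norm_smul, norm_inv, norm_norm, inv_mul_cancel₀ (norm_ne_zero_iff.2 hzne)]
    · intro k hk
      rw [map_smul]
      exact hCsmul _ _ (himp k n hk _ hw0)
  have hUclosed : ∀ n, IsClosed (U n) := by
    intro n
    exact IsClosed.inter Metric.isClosed_sphere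
      (isClosed_biInter fun k _ => hCclosed.preimage (Ψ k).continuous)
  have hUnested : ∀ n, U (n + 1) ⊆ U n := by
    intro n v hv
    rw [hUmem] at hv ⊢
    exact ⟨hv.1, fun k hk => hv.2 k (hk.trans (Nat.le_succ n))⟩
  obtain ⟨e, he⟩ := IsCompact.nonempty_iInter_of_sequence_nonempty_isCompact_isClosed U
    hUnested hUne ((isCompact_sphere 0 1).of_isClosed_subset (hUclosed 0)
      (fun v hv => Set.inter_subset_left hv)) hUclosed
  rw [Set.mem_iInter] at he
  have he1 : ‖e‖ = 1 := ((hUmem 0 e).1 (he 0)).1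
  have heC : ∀ k, Ψ k e ∈ C := fun k => ((hUmem k e).1 (he k)).2 k le_rfl
  have hΨnorm : ∀ n, β ^ n * ‖Ψ n e‖ ≤ 1 := by
    intro n; induction n with
    | zero =>
      rw [pow_zero, one_mul]
      show ‖e‖ ≤ 1
      rw [he1]
    | succ n ih =>
      have hstep := (hAstep n (Ψ (n + 1) e) (heC (n + 1))).2
      have hAe : A n (Ψ (n + 1) e) = Ψ n e := by rw [hΨs]; exact hAD n (Ψ n e)
      rw [hAe] at hstep
      calc β ^ (n + 1) * ‖Ψ (n + 1) e‖ = β ^ n * (β * ‖Ψ (n + 1) e‖) := by ring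
      _ ≤ β ^ n * ‖Ψ n e‖ := mul_le_mul_of_nonneg_left hstep (by positivity)
      _ ≤ 1 := ih
  have hΨne : ∀ n, Ψ n e ≠ 0 := by
    intro n h0
    have h := hBΨ n e
    rw [h0, map_zero] at h
    rw [← h] at he1
    simp at he1
  refine ⟨fun n => Submodule.span ℝ {Ψ n e},
    fun n => finrank_span_singleton (hΨne n), ?_, ?_⟩
  · intro n
    show Submodule.map (Dinv n).toLinearMap (Submodule.span ℝ {Ψ n e}) =
      Submodule.span ℝ {Ψ (n + 1) e}
    rw [Submodule.map_span, Set.image_singleton]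
    rfl
  · intro n v hv
    rw [Submodule.mem_span_singleton] at hv
    obtain ⟨c, hc⟩ := hv
    have hfd : fderiv ℝ ((lozi a b)^[n]) (q n) = B n := (hBfd n).fderiv
    show β ^ n * ‖v‖ ≤ ‖fderiv ℝ ((lozi a b)^[n]) (q n) v‖
    rw [hfd, ← hc, map_smul, norm_smul, norm_smul, hBΨ n e, he1, mul_one]
    calc β ^ n * (‖c‖ * ‖Ψ n e‖) = ‖c‖ * (β ^ n * ‖Ψ n e‖) := by ring
    _ ≤ ‖c‖ * 1 := mul_le_mul_of_nonneg_left (hΨnorm n) (norm_nonneg c)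
    _ = ‖c‖ := mul_one _
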